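/- Let G : ℂ → ℂ be an entire function that vanishes nowhere, and suppose there exist constants C > 0 and A > 0 such that |G(z)| ≤ C e^{A|z|} for all z ∈ ℂ. If G(x) → 1 as x → −∞ along the real axis, then G(z) = 1 for all z ∈ ℂ. (This is the Liouville-type argument used in the proof of the trace formulae: the ratio of the two characteristic determinants is a zero-free entire function of exponential type tending to 1 at −∞, hence identically 1.) -/

import Mathlib

open Complex Filter Set Metric intervalIntegral


/-- Existence of a global logarithm for a zero-free entire function. -/
theorem exists_entire_log (G : ℂ → ℂ) (hG : Differentiable ℂ G) (hne : ∀ z, G z ≠ 0) :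
    ∃ g : ℂ → ℂ, Differentiable ℂ g ∧ ∀ z, Complex.exp (g z) = G z := by
  set f : ℂ → ℂ := fun z => deriv G z / G z with hf
  have hGd : Differentiable ℂ (deriv G) := by
    have h1 : AnalyticOnNhd ℂ G univ := fun z _ => hG.analyticAt z
    exact (differentiableOn_univ).1 (h1.deriv.differentiableOn)
  have hfd : Differentiable ℂ f := hGd.div hG hne
  have hfc : Continuous f := hfd.continuous
  set g : ℂ → ℂ := fun z => Complex.log (G 0) + ∫ t in (0:ℝ)..1, z * f ((t : ℂ) * z) with hg
  -- key identity
  have key : ∀ z, Complex.exp (g z) = G z := by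
    intro z
    set F : ℝ → ℂ := fun t => z * f ((t : ℂ) * z) with hF
    have hFc : Continuous F := by
      apply continuous_const.mul
      exact hfc.comp ((Complex.continuous_ofReal).mul continuous_const)
    set I : ℝ → ℂ := fun t => ∫ s in (0:ℝ)..t, F s with hI
    have hIderiv : ∀ t : ℝ, HasDerivAt I (F t) t := by
      intro t
      exact intervalIntegral.integral_hasDerivAt_right (hFc.intervalIntegrable 0 t)
        hFc.stronglyMeasurable.stronglyMeasurableAtFilter hFc.continuousAt
    set u : ℝ → ℂ := fun t => G ((t : ℂ) * z) * Complex.exp (-(I t)) with hu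
    have hphi : ∀ t : ℝ, HasDerivAt (fun s : ℝ => (s : ℂ) * z) z t := by
      intro t
      have := ((hasDerivAt_id ((t : ℝ) : ℂ)).mul_const z).comp_ofReal
      simpa using this
    have huderiv : ∀ t : ℝ, HasDerivAt u 0 t := by
      intro t
      have h1 : HasDerivAt (fun s : ℝ => G ((s : ℂ) * z)) (deriv G ((t : ℂ) * z) * z) t :=
        (hG _).hasDerivAt.comp t (hphi t)
      have h2 : HasDerivAt (fun s : ℝ => Complex.exp (-(I s)))
          (Complex.exp (-(I t)) * (-(F t))) t := ((hIderiv t).neg).cexp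
      have h3 : HasDerivAt u _ t := h1.mul h2
      convert h3 using 1
      have hGne := hne ((t : ℂ) * z)
      simp only [hF, hf]
      field_simp
      ring
    have hconst : u 1 = u 0 := by
      have hud : Differentiable ℝ u := fun t => (huderiv t).differentiableAt
      exact is_const_of_deriv_eq_zero hud (fun t => (huderiv t).deriv) 1 0
    have hI0 : I 0 = 0 := intervalIntegral.integral_same
    simp only [hu, Complex.ofReal_one, Complex.ofReal_zero, one_mul, zero_mul, hI0, neg_zero,
      Complex.exp_zero, mul_one] at hconst
    have hGz : G z = G 0 * Complex.exp (I 1) := by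
      rw [← hconst, mul_assoc, ← Complex.exp_add, neg_add_cancel, Complex.exp_zero, mul_one]
    show Complex.exp (Complex.log (G 0) + I 1) = G z
    rw [Complex.exp_add, Complex.exp_log (hne 0), hGz]
  -- continuity of g
  have hgc : Continuous g := by
    apply continuous_const.add
    apply continuous_parametric_intervalIntegral_of_continuous'
    exact (continuous_fst.mul (hfc.comp ((Complex.continuous_ofReal.comp continuous_snd).mul
      continuous_fst)))
  -- differentiability of g
  have hgd : Differentiable ℂ g := by
    intro z₀
    have hratio : ContinuousAt (fun z => G z / G z₀) z₀ := (hG.continuous.continuousAt).div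
      continuousAt_const (hne z₀)
    have hr1 : (fun z => G z / G z₀) z₀ = 1 := div_self (hne z₀)
    have heq : ∀ᶠ z in nhds z₀, g z = g z₀ + Complex.log (G z / G z₀) := by
      set w : ℂ → ℂ := fun z => g z - g z₀ - Complex.log (G z / G z₀) with hw
      have hwc : ContinuousAt w z₀ := by
        apply (hgc.continuousAt.sub continuousAt_const).sub
        apply (continuousAt_clog _).comp hratio
        rw [div_self (hne z₀)]; exact Complex.mem_slitPlane_iff.2 (Or.inl one_pos)
      have hw0 : w z₀ = 0 := by simp [hw, hr1]
      have hsmall : ∀ᶠ z in nhds z₀, ‖w z‖ < 1 := by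
        have := hwc.tendsto
        rw [hw0] at this
        have : Tendsto (fun z => ‖w z‖) (nhds z₀) (nhds 0) := by
          simpa [Function.comp_def] using (continuous_norm.continuousAt.tendsto.comp this)
        exact this.eventually_lt_const one_pos
      filter_upwards [hsmall] with z hz
      have hexpw : Complex.exp (w z) = 1 := by
        simp only [hw, Complex.exp_sub, key, Complex.exp_log
          (div_ne_zero (hne z) (hne z₀))]
        exact div_self (div_ne_zero (hne z) (hne z₀))
      obtain ⟨n, hn⟩ := Complex.exp_eq_one_iff.1 hexpw
      have hn0 : n = 0 := by
        by_contra h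
        have h1 : (1:ℝ) ≤ |(n:ℝ)| := by
          rw [← Int.cast_abs]
          exact_mod_cast Int.one_le_abs (by exact_mod_cast h)
        have : ‖w z‖ = |(n:ℝ)| * (2 * Real.pi) := by
          rw [hn]
          simp [Complex.norm_exp, norm_mul, Complex.norm_real, Real.pi_pos.le,
            abs_of_pos Real.pi_pos, mul_assoc]
        rw [this] at hz
        nlinarith [Real.pi_gt_three]
      rw [hn0] at hn
      simp at hn
      rw [hw] at hn
      linear_combination hn
    have hd2 : DifferentiableAt ℂ (fun z => g z₀ + Complex.log (G z / G z₀)) z₀ := by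
      apply DifferentiableAt.add (differentiableAt_const _)
      apply DifferentiableAt.clog ((hG z₀).div (differentiableAt_const _) (hne z₀))
      show G z₀ / G z₀ ∈ slitPlane
      rw [div_self (hne z₀)]
      exact Complex.mem_slitPlane_iff.2 (Or.inl one_pos)
    exact (Filter.EventuallyEq.differentiableAt_iff heq).2 hd2
  exact ⟨g, hgd, key⟩

/-- Derivative bound for an entire function whose real part grows at most linearly. -/
theorem deriv_bound_of_re_le (g : ℂ → ℂ) (hg : Differentiable ℂ g) (K A : ℝ) (hA : 0 < A)
    (hre : ∀ z, (g z).re ≤ K + A * ‖z‖) (c : ℂ) (R : ℝ) (hR : 0 < R) :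
    ‖deriv g c‖ ≤ 2 * (K + A * (‖c‖ + R) + 1 - (g c).re) / R := by
  set M1 : ℝ := K + A * (‖c‖ + R) + 1 with hM1
  set a : ℂ := g c with ha
  have hra : a.re < M1 := by
    have := hre c
    have : a.re ≤ K + A * ‖c‖ := this
    nlinarith
  set b : ℂ := 2 * (M1 : ℂ) - (starRingEnd ℂ) a with hb
  have hbre : b.re = 2 * M1 - a.re := by simp [hb]
  have hbim : b.im = a.im := by simp [hb]
  have hmem : ∀ u : ℂ, u.re < M1 → ‖u - a‖ < ‖u - b‖ := by
    intro u hu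
    apply lt_of_pow_lt_pow_left₀ 2 (norm_nonneg _)
    rw [Complex.sq_norm, Complex.sq_norm, Complex.normSq_apply, Complex.normSq_apply]
    simp only [Complex.sub_re, Complex.sub_im, hbre, hbim]
    nlinarith [hra, hu]
  have hbne : ∀ u : ℂ, u.re < M1 → u - b ≠ 0 := by
    intro u hu h
    have h2 : ‖u - a‖ < 0 := by simpa [h] using hmem u hu
    exact (norm_nonneg _).not_gt h2
  set φ : ℂ → ℂ := fun u => (u - a) / (u - b) with hφ
  set F : ℂ → ℂ := fun z => φ (g z) with hFdef
  have hgball : ∀ z ∈ ball c R, (g z).re < M1 := by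
    intro z hz
    have h1 : ‖z‖ < ‖c‖ + R := by
      have := mem_ball_iff_norm.1 hz
      calc ‖z‖ ≤ ‖c‖ + ‖z - c‖ := by
            simpa [add_comm] using norm_add_le (z - c) c
        _ < ‖c‖ + R := by
            linarith
    have := hre z
    nlinarith
  have hFd : DifferentiableOn ℂ F (ball c R) := by
    intro z hz
    apply DifferentiableAt.differentiableWithinAt
    exact (((hg z).sub_const a).div ((hg z).sub_const b) (hbne _ (hgball z hz)))
  have hFc : F c = 0 := by simp [hFdef, hφ, ← ha]
  have hmaps : MapsTo F (ball c R) (ball (F c) 1) := by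
    intro z hz
    rw [hFc, mem_ball_zero_iff]
    have h2 := hmem (g z) (hgball z hz)
    have h3 : (0:ℝ) < ‖g z - b‖ := lt_of_le_of_lt (norm_nonneg _) h2
    show ‖(g z - a) / (g z - b)‖ < 1
    rw [norm_div, div_lt_one h3]
    exact h2
  have hkey := Complex.norm_deriv_le_div_of_mapsTo_ball hFd (hmaps.mono_right ball_subset_closedBall) hR
  -- compute deriv F c
  have hca : c ∈ ball c R := mem_ball_self hR
  have hane : a - b ≠ 0 := hbne a hra
  have hφ' : HasDerivAt φ ((a - b)⁻¹) a := by
    have h1 := ((hasDerivAt_id a).sub_const a).mul (((hasDerivAt_id a).sub_const b).inv hane)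
    simp only [id] at h1
    have hφψ : φ = fun u : ℂ => (u - a) * (u - b)⁻¹ := by
      funext u; simp [hφ, div_eq_mul_inv]
    rw [hφψ]
    rw [show ((a - b)⁻¹) = 1 * (a - b)⁻¹ + (a - a) * (-1 / (a - b) ^ 2) by ring]
    exact h1
  have hFderiv : HasDerivAt F ((a - b)⁻¹ * deriv g c) c :=
    HasDerivAt.comp c hφ' (hg c).hasDerivAt
  rw [hFderiv.deriv] at hkey
  have habs : ‖a - b‖ = 2 * (M1 - a.re) := by
    have : a - b = ((2 * a.re - 2 * M1 : ℝ) : ℂ) := by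
      apply Complex.ext <;> simp [hbre, hbim] <;> ring
    rw [this, Complex.norm_real, Real.norm_eq_abs]
    rw [abs_of_nonpos (by linarith)]
    ring
  have hpos : 0 < 2 * (M1 - a.re) := by linarith
  rw [norm_mul, norm_inv] at hkey
  have hn : (0:ℝ) < ‖a - b‖ := by rw [habs]; exact hpos
  calc ‖deriv g c‖ = ‖a - b‖ * (‖a - b‖⁻¹ * ‖deriv g c‖) := by
        rw [← mul_assoc, mul_inv_cancel₀ (ne_of_gt hn), one_mul]
    _ ≤ ‖a - b‖ * (1 / R) := by
        exact mul_le_mul_of_nonneg_left hkey hn.le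
    _ = 2 * (M1 - a.re) / R := by
        rw [habs]; ring


/-- Liouville-type argument. If `G : ℂ → ℂ` is entire, zero-free,
of exponential type (`|G(z)| ≤ C e^{A|z|}`), and `G(x) → 1` as `x → -∞` along the
real axis, then `G ≡ 1`. -/
theorem liouville_type_argument (G : ℂ → ℂ) (hG : Differentiable ℂ G)
    (hne : ∀ z, G z ≠ 0)
    (hbd : ∃ C > (0:ℝ), ∃ A > (0:ℝ), ∀ z : ℂ,
      ‖G z‖ ≤ C * Real.exp (A * ‖z‖))
    (hlim : Tendsto (fun x : ℝ => G (x : ℂ)) atBot (nhds 1)) :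
    ∀ z : ℂ, G z = 1 := by
  obtain ⟨C, hC, A, hA, hCA⟩ := hbd
  obtain ⟨g, hgd, hgG⟩ := exists_entire_log G hG hne
  -- real part bound
  have hre : ∀ z, (g z).re ≤ Real.log C + A * ‖z‖ := by
    intro z
    have h1 : Real.exp ((g z).re) = ‖G z‖ := by
      rw [← hgG z, Complex.norm_exp]
    have h2 : Real.exp ((g z).re) ≤ C * Real.exp (A * ‖z‖) := by
      rw [h1]; exact hCA z
    have h3 : Real.exp ((g z).re) ≤ Real.exp (Real.log C + A * ‖z‖) := by
      rwa [Real.exp_add, Real.exp_log hC]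
    exact Real.exp_le_exp.1 h3
  -- derivative bound
  have hdb : ∀ c : ℂ, ‖deriv g c‖ ≤ 2 * A := by
    intro c
    have hlimR : Tendsto (fun R : ℝ =>
        2 * (Real.log C + A * (‖c‖ + R) + 1 - (g c).re) / R) atTop
        (nhds (2 * A)) := by
      have heq : ∀ᶠ R : ℝ in atTop, 2 * (Real.log C + A * (‖c‖ + R) + 1 - (g c).re) / R
          = 2 * (Real.log C + A * ‖c‖ + 1 - (g c).re) / R + 2 * A := by
        filter_upwards [eventually_gt_atTop (0:ℝ)] with R hR
        field_simp
        ring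
      rw [tendsto_congr' heq]
      have h0 : Tendsto (fun R : ℝ =>
          2 * (Real.log C + A * ‖c‖ + 1 - (g c).re) / R) atTop (nhds 0) :=
        Tendsto.div_atTop tendsto_const_nhds tendsto_id
      simpa using h0.add tendsto_const_nhds
    apply ge_of_tendsto hlimR
    filter_upwards [eventually_gt_atTop (0:ℝ)] with R hR
    exact deriv_bound_of_re_le g hgd (Real.log C) A hA hre c R hR
  -- deriv g is constant
  have hgdd : Differentiable ℂ (deriv g) := by
    have h1 : AnalyticOnNhd ℂ g univ := fun z _ => hgd.analyticAt z
    exact differentiableOn_univ.1 h1.deriv.differentiableOn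
  set a : ℂ := deriv g 0 with ha
  have hconst : ∀ c : ℂ, deriv g c = a := by
    intro c
    apply hgdd.apply_eq_apply_of_bounded
    apply isBounded_iff_forall_norm_le.2
    exact ⟨2 * A, by rintro x ⟨c', rfl⟩; exact hdb c'⟩
  -- g is affine
  have haff : ∀ z, g z = a * z + g 0 := by
    intro z
    have hk : Differentiable ℂ (fun z => g z - a * z) :=
      hgd.sub ((differentiable_id.const_mul a))
    have hk' : ∀ z, deriv (fun z => g z - a * z) z = 0 := by
      intro z
      have h := ((hgd z).hasDerivAt.sub ((hasDerivAt_id z).const_mul a)).deriv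
      simp only [id_eq] at h
      rw [show (fun z => g z - a * z) = (g - fun y => a * y) from rfl, h, hconst z]
      ring
    have := is_const_of_deriv_eq_zero hk hk' z 0
    simp only [mul_zero, sub_zero] at this
    linear_combination this
  have hGform : ∀ z, G z = Complex.exp (a * z + g 0) := by
    intro z
    rw [← hgG z, haff z]
  -- exp (a * c) = 1 for all real c
  have hexp1 : ∀ c : ℝ, Complex.exp (a * c) = 1 := by
    intro c
    have h1 : Tendsto (fun x : ℝ => G ((x + c : ℝ) : ℂ)) atBot (nhds 1) :=
      hlim.comp (tendsto_atBot_add_const_right atBot c tendsto_id)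
    have h2 : (fun x : ℝ => G ((x + c : ℝ) : ℂ)) =
        fun x : ℝ => Complex.exp (a * c) * G (x : ℂ) := by
      funext x
      rw [hGform, hGform]
      push_cast
      rw [← Complex.exp_add]
      ring_nf
    rw [h2] at h1
    have h3 : Tendsto (fun x : ℝ => Complex.exp (a * c) * G (x : ℂ)) atBot
        (nhds (Complex.exp (a * c) * 1)) := tendsto_const_nhds.mul hlim
    have h4 := tendsto_nhds_unique h1 h3
    rw [mul_one] at h4
    exact h4.symm
  -- hence a = 0
  have ha0 : a = 0 := by
    by_contra hne0
    have habs : ‖a‖ > 0 := by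
      simpa using hne0
    set c : ℝ := Real.pi / ‖a‖ with hc
    have hc0 : 0 < c := div_pos Real.pi_pos habs
    obtain ⟨n, hn⟩ := Complex.exp_eq_one_iff.1 (hexp1 c)
    have h5 : ‖a * (c : ℂ)‖ = Real.pi := by
      rw [norm_mul, Complex.norm_real, Real.norm_eq_abs, abs_of_pos hc0, hc]
      field_simp
    rw [hn] at h5
    have h6 : ‖(n : ℂ) * (2 * Real.pi * Complex.I)‖ =
        |(n : ℝ)| * (2 * Real.pi) := by
      rw [norm_mul, norm_mul, norm_mul]
      simp [abs_of_pos Real.pi_pos]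
    rw [h6] at h5
    rcases eq_or_ne n 0 with h | h
    · rw [h] at h5
      simp at h5
      exact Real.pi_pos.ne' h5.symm
    · have h7 : (1:ℝ) ≤ |(n:ℝ)| := by
        rw [← Int.cast_abs]
        exact_mod_cast Int.one_le_abs h
      nlinarith [Real.pi_pos]
  -- conclude
  have hconst1 : Complex.exp (g 0) = 1 := by
    have h1 : (fun x : ℝ => G (x : ℂ)) = fun _ : ℝ => Complex.exp (g 0) := by
      funext x
      rw [hGform, ha0]
      simp
    rw [h1] at hlim
    exact tendsto_nhds_unique tendsto_const_nhds hlim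
  intro z
  rw [hGform, ha0, zero_mul, zero_add, hconst1]
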